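/- Let m ≥ 1 and let U₁, W₁, U₂, W₂ be pairwise disjoint sets, each of size m. Let α : U₁ → W₁, β : W₁ → U₂ and γ : U₂ → W₂ be bijections, set δ = γ ∘ β ∘ α, and let G be the digraph on V = U₁ ∪ U₂ ∪ W₁ ∪ W₂ with color classes U = U₁ ∪ U₂ and W = W₁ ∪ W₂ whose edges are exactly: u α(u) for u ∈ U₁; w β(w) for w ∈ W₁; u γ(u) for u ∈ U₂; and u δ(u) for u ∈ U₁. For any permutation π of U₁, define φ : V → V by φ(x) = π(x) for x ∈ U₁, φ(x) = (α ∘ π ∘ α⁻¹)(x) for x ∈ W₁, φ(x) = ((β∘α) ∘ π ∘ (β∘α)⁻¹)(x) for x ∈ U₂, and φ(x) = (δ ∘ π ∘ δ⁻¹)(x) for x ∈ W₂. Then φ is a color-preserving automorphism of G, and the map π ↦ φ is an injective group homomorphism from Sym(U₁) into Aut_I(G). -/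
import Mathlib


/-- Two vertices are equivalent (`x ∼̇ y`) if they have the same
out-neighbors and the same in-neighbors. -/
def dotSim {V : Type*} (E : V → V → Prop) (x y : V) : Prop :=
  (∀ z, E x z ↔ E y z) ∧ (∀ z, E z x ↔ E z y)

/-- `U` and `W` are the color classes of a 2-colored digraph with edge relation `E`:
they partition the vertex set and every edge has one endpoint in each class. -/
def IsTwoColored {V : Type*} (E : V → V → Prop) (U W : Set V) : Prop :=
  (∀ v, v ∈ U ∨ v ∈ W) ∧ (∀ v, ¬(v ∈ U ∧ v ∈ W)) ∧
    ∀ u v, E u v → (u ∈ U ∧ v ∈ W) ∨ (u ∈ W ∧ v ∈ U)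

/-- Axiom (N1). -/
def AxN1 {V : Type*} (E : V → V → Prop) : Prop :=
  ∀ u v, u ≠ v → ¬E u v → ¬E v u → ∀ w t, ¬(E u t ∧ E v w ∧ E t w)

/-- Axiom (N2): bi-transitivity. -/
def AxN2 {V : Type*} (E : V → V → Prop) : Prop :=
  ∀ u v w t, E u v → E v w → E w t → E u t

/-- Axiom (N3). -/
def AxN3 {V : Type*} (E : V → V → Prop) : Prop :=
  ∀ u v w, E u w → E v w → (∀ z, E u z → E v z) ∨ (∀ z, E v z → E u z)

/-- A 2-qBMG: an irreflexive 2-colored digraph satisfying (N1), (N2), (N3). -/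
def IsQBMG {V : Type*} (E : V → V → Prop) (U W : Set V) : Prop :=
  (∀ v, ¬E v v) ∧ IsTwoColored E U W ∧ AxN1 E ∧ AxN2 E ∧ AxN3 E

/-- An automorphism of the digraph: a permutation mapping edges to edges. -/
def IsAut {V : Type*} (E : V → V → Prop) (π : Equiv.Perm V) : Prop :=
  ∀ u v, E u v → E (π u) (π v)

/-- A color-preserving automorphism of the 2-colored digraph. -/
def IsAutI {V : Type*} (E : V → V → Prop) (U W : Set V) (π : Equiv.Perm V) : Prop :=
  IsAut E π ∧ (∀ v ∈ U, π v ∈ U) ∧ (∀ v ∈ W, π v ∈ W)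

/-- The edge relation of Example "ex2310204": on the disjoint union
`U₁ ⊔ W₁ ⊔ U₂ ⊔ W₂`, the edges are exactly `u → α u` (`u ∈ U₁`), `w → β w` (`w ∈ W₁`),
`u → γ u` (`u ∈ U₂`) and `u → δ u = γ (β (α u))` (`u ∈ U₁`). -/
def exEdges {U₁ W₁ U₂ W₂ : Type*} (α : U₁ ≃ W₁) (β : W₁ ≃ U₂) (γ : U₂ ≃ W₂) :
    (U₁ ⊕ W₁ ⊕ U₂ ⊕ W₂) → (U₁ ⊕ W₁ ⊕ U₂ ⊕ W₂) → Prop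
  | Sum.inl u, Sum.inr (Sum.inl w) => w = α u
  | Sum.inr (Sum.inl w), Sum.inr (Sum.inr (Sum.inl u)) => u = β w
  | Sum.inr (Sum.inr (Sum.inl u)), Sum.inr (Sum.inr (Sum.inr w)) => w = γ u
  | Sum.inl u, Sum.inr (Sum.inr (Sum.inr w)) => w = γ (β (α u))
  | _, _ => False

/-- The color class `U = U₁ ∪ U₂` of the example. -/
def exU (U₁ W₁ U₂ W₂ : Type*) : Set (U₁ ⊕ W₁ ⊕ U₂ ⊕ W₂) :=
  {v | match v with
       | Sum.inl _ => True
       | Sum.inr (Sum.inr (Sum.inl _)) => True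
       | _ => False}

/-- The color class `W = W₁ ∪ W₂` of the example. -/
def exW (U₁ W₁ U₂ W₂ : Type*) : Set (U₁ ⊕ W₁ ⊕ U₂ ⊕ W₂) :=
  {v | match v with
       | Sum.inr (Sum.inl _) => True
       | Sum.inr (Sum.inr (Sum.inr _)) => True
       | _ => False}

/-- The permutation `φ` attached to a permutation `π` of `U₁`: it acts as `π` on `U₁`,
as `α ∘ π ∘ α⁻¹` on `W₁`, as `(β∘α) ∘ π ∘ (β∘α)⁻¹` on `U₂` and as `δ ∘ π ∘ δ⁻¹`
(with `δ = γ ∘ β ∘ α`) on `W₂`. -/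
def exPhi {U₁ W₁ U₂ W₂ : Type*} (α : U₁ ≃ W₁) (β : W₁ ≃ U₂) (γ : U₂ ≃ W₂)
    (π : Equiv.Perm U₁) : Equiv.Perm (U₁ ⊕ W₁ ⊕ U₂ ⊕ W₂) :=
  Equiv.sumCongr π (Equiv.sumCongr (α.symm.trans (π.trans α))
    (Equiv.sumCongr ((α.trans β).symm.trans (π.trans (α.trans β)))
      (((α.trans β).trans γ).symm.trans (π.trans ((α.trans β).trans γ)))))

/-- With the digraph of Statement 13, for every permutation `π` of
`U₁` the map `φ = exPhi α β γ π` (given piecewise by `π`, `α∘π∘α⁻¹`, `(β∘α)∘π∘(β∘α)⁻¹`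
and `δ∘π∘δ⁻¹`) is a color-preserving automorphism of `G`, and `π ↦ φ` is an injective
group homomorphism from `Sym(U₁)` into `Aut_I(G)`. -/
theorem stmt_14 {U₁ W₁ U₂ W₂ : Type*}
    [Fintype U₁] [Fintype W₁] [Fintype U₂] [Fintype W₂]
    [DecidableEq U₁] [DecidableEq W₁] [DecidableEq U₂] [DecidableEq W₂]
    (m : ℕ) (hm : 1 ≤ m)
    (hU₁ : Fintype.card U₁ = m) (hW₁ : Fintype.card W₁ = m)
    (hU₂ : Fintype.card U₂ = m) (hW₂ : Fintype.card W₂ = m)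
    (α : U₁ ≃ W₁) (β : W₁ ≃ U₂) (γ : U₂ ≃ W₂) :
    (∀ π : Equiv.Perm U₁, ∀ u : U₁,
        exPhi α β γ π (Sum.inl u) = Sum.inl (π u)) ∧
    (∀ π : Equiv.Perm U₁, ∀ w : W₁,
        exPhi α β γ π (Sum.inr (Sum.inl w)) = Sum.inr (Sum.inl (α (π (α.symm w))))) ∧
    (∀ π : Equiv.Perm U₁, ∀ u : U₂,
        exPhi α β γ π (Sum.inr (Sum.inr (Sum.inl u))) =
          Sum.inr (Sum.inr (Sum.inl (β (α (π (α.symm (β.symm u)))))))) ∧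
    (∀ π : Equiv.Perm U₁, ∀ w : W₂,
        exPhi α β γ π (Sum.inr (Sum.inr (Sum.inr w))) =
          Sum.inr (Sum.inr (Sum.inr (γ (β (α (π (α.symm (β.symm (γ.symm w)))))))))) ∧
    (∀ π : Equiv.Perm U₁,
        IsAutI (exEdges α β γ) (exU U₁ W₁ U₂ W₂) (exW U₁ W₁ U₂ W₂) (exPhi α β γ π)) ∧
    Function.Injective (exPhi α β γ) ∧
    (∀ π σ : Equiv.Perm U₁, exPhi α β γ (π * σ) = exPhi α β γ π * exPhi α β γ σ) := by
  refine ⟨fun π u => rfl, fun π w => rfl, fun π u => rfl, fun π w => rfl, ?_, ?_, ?_⟩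
  · intro π
    refine ⟨?_, ?_, ?_⟩
    · rintro (u | w | u | w) (u' | w' | u' | w') h <;>
        simp_all [exEdges, exPhi]
    · rintro (u | w | u | w) h <;> simp_all [exU, exPhi]
    · rintro (u | w | u | w) h <;> simp_all [exW, exPhi]
  · intro π σ h
    ext u
    have := congrArg (fun e : Equiv.Perm _ => e (Sum.inl u)) h
    simpa [exPhi] using this
  · intro π σ
    ext v
    rcases v with u | w | u | w <;> simp [exPhi]
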